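/- The iterates of Algorithm (DG) satisfy, for all k ≥ 0: (i) ‖x^k − x*‖ ≤ ‖x^0 − x*‖ for every x* ∈ X*; (ii) the ascent property d(x^{k+1}) ≥ d(x^k) + (L_d/2)·‖x^{k+1} − x^k‖²; and (iii) ‖x^{k+1}‖² ≤ ‖x^k‖² + 2 α_k (f* − f(u^k)). -/

import Mathlib

open scoped RealInnerProductSpace

lemma strong_min_aux {E : Type*} [NormedAddCommGroup E] [InnerProductSpace ℝ E]
    {σ : ℝ} (hσ : 0 < σ) {f φ : E → ℝ}
    (hf : StrongConvexOn Set.univ σ f)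
    (hφ : ∀ (a b : ℝ), a + b = 1 → ∀ u v, φ (a • u + b • v) = a * φ u + b * φ v)
    {U : Set E} (hU : Convex ℝ U) {m : E} (hm : m ∈ U)
    (hmin : ∀ u ∈ U, f m + φ m ≤ f u + φ u) :
    ∀ u ∈ U, f m + φ m + σ / 2 * ‖u - m‖ ^ 2 ≤ f u + φ u := by
  intro u hu
  set C := σ / 2 * ‖u - m‖ ^ 2 with hCdef
  have hC0 : 0 ≤ C := by positivity
  have key : ∀ t : ℝ, 0 < t → t < 1 → f m + φ m + (1 - t) * C ≤ f u + φ u := by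
    intro t ht0 ht1
    have hsc := hf.2 (Set.mem_univ u) (Set.mem_univ m) (le_of_lt ht0)
      (by linarith : (0:ℝ) ≤ 1 - t) (by ring)
    have hmem : t • u + (1 - t) • m ∈ U := hU hu hm (le_of_lt ht0) (by linarith) (by ring)
    have h1 := hmin _ hmem
    have h2 := hφ t (1 - t) (by ring) u m
    rw [smul_eq_mul, smul_eq_mul] at hsc
    have hsc' : f (t • u + (1 - t) • m) ≤ t * f u + (1 - t) * f m - t * (1 - t) * C := by
      simpa [hCdef] using hsc
    have h3 : t * (f m + φ m + (1 - t) * C) ≤ t * (f u + φ u) := by nlinarith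
    exact le_of_mul_le_mul_left h3 ht0
  refine le_of_forall_sub_le ?_
  intro ε hε
  rcases eq_or_lt_of_le hC0 with hC | hC
  · have := key (1/2) (by norm_num) (by norm_num)
    rw [← hC] at this ⊢
    linarith
  · set t := min (1/2 : ℝ) (ε / (2 * C)) with ht
    have ht0 : 0 < t := lt_min (by norm_num) (by positivity)
    have ht1 : t < 1 := lt_of_le_of_lt (min_le_left _ _) (by norm_num)
    have htC : t * C ≤ ε / 2 := by
      have : t ≤ ε / (2 * C) := min_le_right _ _
      calc t * C ≤ (ε / (2 * C)) * C := by nlinarith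
        _ = ε / 2 := by field_simp
    have := key t ht0 ht1
    nlinarith

lemma proj_vi_aux {E : Type*} [NormedAddCommGroup E] [InnerProductSpace ℝ E]
    {S : Set E} (hS : Convex ℝ S) {z P : E} (hP : P ∈ S)
    (hmin : ∀ w ∈ S, ‖z - P‖ ≤ ‖z - w‖) : ∀ w ∈ S, ⟪z - P, w - P⟫ ≤ 0 := by
  haveI : Nonempty S := ⟨⟨P, hP⟩⟩
  have hbd : BddBelow (Set.range fun w : S => ‖z - w‖) := by
    refine ⟨0, ?_⟩
    rintro _ ⟨w, rfl⟩
    exact norm_nonneg _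
  have heq : ‖z - P‖ = ⨅ w : S, ‖z - w‖ :=
    le_antisymm (le_ciInf fun w => hmin w w.2) (ciInf_le hbd (⟨P, hP⟩ : S))
  exact (norm_eq_iInf_iff_real_inner_le_zero hS hP).mp heq

set_option maxHeartbeats 1000000 in
theorem stmt_4 {n p : ℕ}
    (f : EuclideanSpace ℝ (Fin n) → ℝ) (σf : ℝ) (hσf : 0 < σf)
    (hfc : Continuous f) (hfsc : StrongConvexOn Set.univ σf f)
    (U : Set (EuclideanSpace ℝ (Fin n))) (hUne : U.Nonempty) (hUcl : IsClosed U) (hUcv : Convex ℝ U)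
    (G : EuclideanSpace ℝ (Fin n) →L[ℝ] EuclideanSpace ℝ (Fin p)) (hG : G ≠ 0) (g : EuclideanSpace ℝ (Fin p))
    (K : Set (EuclideanSpace ℝ (Fin p))) (hKne : K.Nonempty) (hKcl : IsClosed K) (hKcv : Convex ℝ K)
    (hKcone : ∀ c : ℝ, 0 ≤ c → ∀ v ∈ K, c • v ∈ K)
    (Kstar : Set (EuclideanSpace ℝ (Fin p)))
    (hKstar : Kstar = {x : EuclideanSpace ℝ (Fin p) | ∀ v ∈ K, 0 ≤ ⟪x, v⟫})
    (Lag : EuclideanSpace ℝ (Fin n) → EuclideanSpace ℝ (Fin p) → ℝ)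
    (hLag : ∀ u x, Lag u x = f u + ⟪x, -(G u) - g⟫)
    (uu : EuclideanSpace ℝ (Fin p) → EuclideanSpace ℝ (Fin n))
    (huu : ∀ x : EuclideanSpace ℝ (Fin p), uu x ∈ U ∧ ∀ u ∈ U, Lag (uu x) x ≤ Lag u x)
    (d : EuclideanSpace ℝ (Fin p) → ℝ) (hd : ∀ x, d x = Lag (uu x) x)
    (ustar : EuclideanSpace ℝ (Fin n))
    (hustar : ustar ∈ U ∧ G ustar + g ∈ K ∧ ∀ u ∈ U, G u + g ∈ K → f ustar ≤ f u)
    (fstar : ℝ) (hfstar : fstar = f ustar)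
    (Xstar : Set (EuclideanSpace ℝ (Fin p))) (hXstar : Xstar = {x ∈ Kstar | d x = fstar})
    (hXne : Xstar.Nonempty)
    (Ld : ℝ) (hLd : Ld = ‖G‖ ^ 2 / σf)
    (projKs : EuclideanSpace ℝ (Fin p) → EuclideanSpace ℝ (Fin p))
    (hprojKs : ∀ z : EuclideanSpace ℝ (Fin p), projKs z ∈ Kstar ∧ ∀ w ∈ Kstar, ‖z - projKs z‖ ≤ ‖z - w‖)
    (LG : ℝ) (hLG : Ld ≤ LG) (α : ℕ → ℝ)
    (hα : ∀ k, 1 / LG ≤ α k ∧ α k ≤ 1 / Ld)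
    (x : ℕ → EuclideanSpace ℝ (Fin p)) (hx0K : x 0 ∈ Kstar)
    (hxrec : ∀ k, x (k + 1) = projKs (x k + α k • (-(G (uu (x k))) - g)))
 :
    (∀ k : ℕ, ∀ xs ∈ Xstar, ‖x k - xs‖ ≤ ‖x 0 - xs‖) ∧
    (∀ k : ℕ, d (x (k + 1)) ≥ d (x k) + Ld / 2 * ‖x (k + 1) - x k‖ ^ 2) ∧
    (∀ k : ℕ, ‖x (k + 1)‖ ^ 2 ≤ ‖x k‖ ^ 2 + 2 * α k * (fstar - f (uu (x k)))) := by
  -- basic positivity facts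
  have hGpos : (0:ℝ) < ‖G‖ := norm_pos_iff.mpr hG
  have hLd0 : 0 < Ld := by rw [hLd]; positivity
  have hLG0 : 0 < LG := lt_of_lt_of_le hLd0 hLG
  have hα0 : ∀ k, 0 < α k := fun k => lt_of_lt_of_le (by positivity) (hα k).1
  have hαLd : ∀ k, α k * Ld ≤ 1 := fun k => (le_div_iff₀ hLd0).mp (hα k).2
  -- Kstar properties
  have hKs0 : (0 : EuclideanSpace ℝ (Fin p)) ∈ Kstar := by
    rw [hKstar]; intro v hv; simp
  have hKscv : Convex ℝ Kstar := by
    rw [hKstar]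
    intro y hy w hw a b ha hb hab
    intro v hv
    rw [inner_add_left, real_inner_smul_left, real_inner_smul_left]
    exact add_nonneg (mul_nonneg ha (hy v hv)) (mul_nonneg hb (hw v hv))
  have hKs_smul : ∀ (c : ℝ), 0 ≤ c → ∀ w ∈ Kstar, c • w ∈ Kstar := by
    rw [hKstar]
    intro c hc w hw v hv
    rw [real_inner_smul_left]
    exact mul_nonneg hc (hw v hv)
  have hxK : ∀ k, x k ∈ Kstar := by
    intro k
    induction k with
    | zero => exact hx0K
    | succ k ih => rw [hxrec k]; exact (hprojKs _).1
  have hVI : ∀ z, ∀ w ∈ Kstar, ⟪z - projKs z, w - projKs z⟫ ≤ 0 := fun z =>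
    proj_vi_aux hKscv (hprojKs z).1 (hprojKs z).2
  -- strong minimality of uu X
  have hSM : ∀ X, ∀ u ∈ U, Lag (uu X) X + σf / 2 * ‖u - uu X‖ ^ 2 ≤ Lag u X := by
    intro X u hu
    have haff : ∀ (a b : ℝ), a + b = 1 → ∀ u v : EuclideanSpace ℝ (Fin n),
        (fun w => ⟪X, -(G w) - g⟫) (a • u + b • v)
          = a * (fun w => ⟪X, -(G w) - g⟫) u + b * (fun w => ⟪X, -(G w) - g⟫) v := by
      intro a b hab u v
      have h2 : -(G (a • u + b • v)) - g = a • (-(G u) - g) + b • (-(G v) - g) := by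
        have h2' : a • (-(G u) - g) + b • (-(G v) - g)
            = -(a • G u + b • G v) - (a + b) • g := by
          simp only [smul_sub, smul_neg, add_smul]
          abel
        rw [h2', hab, one_smul, map_add, map_smul, map_smul]
      simp only []
      rw [h2, inner_add_right, real_inner_smul_right, real_inner_smul_right]
    have hmin : ∀ w ∈ U, f (uu X) + (fun w => ⟪X, -(G w) - g⟫) (uu X)
        ≤ f w + (fun w => ⟪X, -(G w) - g⟫) w := by
      intro w hw
      have h := (huu X).2 w hw
      rw [hLag, hLag] at h
      exact h
    have := strong_min_aux (φ := fun w => ⟪X, -(G w) - g⟫) hσf hfsc haff hUcv (huu X).1 hmin u hu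
    rw [hLag, hLag]
    exact this
  -- concavity gradient inequality
  have hgrad : ∀ X Y, d Y ≤ d X + ⟪Y - X, -(G (uu X)) - g⟫ := by
    intro X Y
    have h1 : d Y ≤ Lag (uu X) Y := by rw [hd]; exact (huu Y).2 _ (huu X).1
    rw [hLag] at h1
    rw [hd X, hLag]
    have h2 : ⟪Y - X, -(G (uu X)) - g⟫ = ⟪Y, -(G (uu X)) - g⟫ - ⟪X, -(G (uu X)) - g⟫ :=
      inner_sub_left _ _ _
    linarith
  -- descent lemma (quadratic lower bound)
  have hdesc : ∀ X Y, d X + ⟪Y - X, -(G (uu X)) - g⟫ - Ld / 2 * ‖Y - X‖ ^ 2 ≤ d Y := by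
    intro X Y
    have hA := hSM X (uu Y) (huu Y).1
    rw [hLag, hLag] at hA
    rw [hd Y, hLag, hd X, hLag]
    have e1 : ⟪Y, -(G (uu Y)) - g⟫ - ⟪X, -(G (uu Y)) - g⟫ = ⟪Y - X, -(G (uu Y)) - g⟫ :=
      (inner_sub_left _ _ _).symm
    have e2 : ⟪Y - X, -(G (uu Y)) - g⟫ - ⟪Y - X, -(G (uu X)) - g⟫
        = ⟪Y - X, G (uu X) - G (uu Y)⟫ := by
      rw [← inner_sub_right]
      congr 1
      abel
    have hCS : -(‖G‖ * ‖Y - X‖ * ‖uu X - uu Y‖) ≤ ⟪Y - X, G (uu X) - G (uu Y)⟫ := by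
      have h1 : |⟪Y - X, G (uu X) - G (uu Y)⟫| ≤ ‖Y - X‖ * ‖G (uu X) - G (uu Y)‖ :=
        abs_real_inner_le_norm _ _
      have h2 : ‖G (uu X) - G (uu Y)‖ ≤ ‖G‖ * ‖uu X - uu Y‖ := by
        rw [← map_sub]; exact G.le_opNorm _
      have h3 := neg_abs_le ⟪Y - X, G (uu X) - G (uu Y)⟫
      nlinarith [norm_nonneg (Y - X)]
    have hnr : ‖uu Y - uu X‖ = ‖uu X - uu Y‖ := norm_sub_rev _ _
    rw [hnr] at hA
    have hLdσ : Ld * σf = ‖G‖ ^ 2 := by rw [hLd]; field_simp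
    have hAM : σf / 2 * ‖uu X - uu Y‖ ^ 2 - ‖G‖ * ‖Y - X‖ * ‖uu X - uu Y‖
        ≥ -(Ld / 2 * ‖Y - X‖ ^ 2) := by
      nlinarith [sq_nonneg (σf * ‖uu X - uu Y‖ - ‖G‖ * ‖Y - X‖), hσf, hLdσ]
    linarith
  -- weak duality
  have hwd : ∀ X ∈ Kstar, d X ≤ fstar := by
    intro X hX
    have h1 : d X ≤ Lag ustar X := by rw [hd]; exact (huu X).2 _ hustar.1
    rw [hLag] at h1
    have h2 : -(G ustar) - g = -(G ustar + g) := by abel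
    rw [h2, inner_neg_right] at h1
    have h4 : 0 ≤ ⟪X, G ustar + g⟫ := by
      rw [hKstar] at hX; exact hX _ hustar.2.1
    rw [hfstar]
    linarith
  -- per-step analysis
  have key : ∀ k : ℕ, (∀ xs ∈ Xstar, ‖x (k+1) - xs‖ ≤ ‖x k - xs‖) ∧
      (d (x (k+1)) ≥ d (x k) + Ld / 2 * ‖x (k+1) - x k‖ ^ 2) ∧
      (‖x (k+1)‖ ^ 2 ≤ ‖x k‖ ^ 2 + 2 * α k * (fstar - f (uu (x k)))) := by
    intro k
    set A := x k with hAd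
    set sA : EuclideanSpace ℝ (Fin p) := -(G (uu A)) - g with hsA
    set P := x (k+1) with hPd
    set z := A + α k • sA with hz
    have hPz : P = projKs z := hxrec k
    have hPK : P ∈ Kstar := by rw [hPz]; exact (hprojKs z).1
    have hzP : ∀ w ∈ Kstar, ⟪z - P, w - P⟫ ≤ 0 := by
      rw [hPz]; exact hVI z
    have hzPe : z - P = (A - P) + α k • sA := by rw [hz]; abel
    have hAK : A ∈ Kstar := hxK k
    -- projection inequality with w = A
    have hkey1 : ‖P - A‖ ^ 2 ≤ α k * ⟪sA, P - A⟫ := by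
      have h := hzP A hAK
      rw [hzPe, inner_add_left, real_inner_smul_left, real_inner_self_eq_norm_sq] at h
      have h2 : ⟪sA, A - P⟫ = -⟪sA, P - A⟫ := by
        rw [show A - P = -(P - A) by abel, inner_neg_right]
      have h3 : ‖A - P‖ = ‖P - A‖ := norm_sub_rev _ _
      rw [h2, h3] at h
      linarith
    -- descent lemma instance
    have hD : d A + ⟪P - A, sA⟫ - Ld / 2 * ‖P - A‖ ^ 2 ≤ d P := hdesc A P
    have hcomm : ⟪P - A, sA⟫ = ⟪sA, P - A⟫ := real_inner_comm _ _
    -- part (ii)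
    have part2 : d P ≥ d A + Ld / 2 * ‖P - A‖ ^ 2 := by
      have hI : Ld * ‖P - A‖ ^ 2 ≤ ⟪sA, P - A⟫ := by
        nlinarith [hkey1, hαLd k, hα0 k, sq_nonneg ‖P - A‖]
      rw [hcomm] at hD
      linarith
    -- orthogonality
    have horth : ⟪z - P, P⟫ = 0 := by
      have h0 := hzP 0 hKs0
      have h2 := hzP ((2:ℝ) • P) (hKs_smul 2 (by norm_num) P hPK)
      rw [show (0 : EuclideanSpace ℝ (Fin p)) - P = -P by abel, inner_neg_right] at h0
      rw [show (2:ℝ) • P - P = P by rw [two_smul]; abel] at h2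
      linarith
    have hform : ‖P‖ ^ 2 - ‖A‖ ^ 2 = 2 * (α k * ⟪sA, P⟫) - ‖P - A‖ ^ 2 := by
      have h1 : ⟪P - A, P⟫ = α k * ⟪sA, P⟫ := by
        have := horth
        rw [hzPe, inner_add_left, real_inner_smul_left] at this
        have e : ⟪A - P, P⟫ = -⟪P - A, P⟫ := by
          rw [show A - P = -(P - A) by abel, inner_neg_left]
        rw [e] at this
        linarith
      have h2 : ‖P - A‖ ^ 2 = ‖P‖ ^ 2 - 2 * ⟪P, A⟫ + ‖A‖ ^ 2 := norm_sub_sq_real P A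
      have h3 : ⟪P - A, P⟫ = ‖P‖ ^ 2 - ⟪A, P⟫ := by
        rw [inner_sub_left, real_inner_self_eq_norm_sq]
      have h4 : ⟪P, A⟫ = ⟪A, P⟫ := real_inner_comm _ _
      rw [h3] at h1
      linarith
    -- bound on ⟪sA, P⟫
    have hdA : d A = f (uu A) + ⟪A, sA⟫ := by rw [hd, hLag, ← hsA]
    have hbound : ⟪sA, P⟫ ≤ fstar - f (uu A) + Ld / 2 * ‖P - A‖ ^ 2 := by
      have hfP : d P ≤ fstar := hwd P hPK
      have h1 : ⟪P - A, sA⟫ = ⟪P, sA⟫ - ⟪A, sA⟫ := inner_sub_left _ _ _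
      have h2 : ⟪P, sA⟫ = ⟪sA, P⟫ := real_inner_comm _ _
      linarith [hD]
    -- part (iii)
    have part3 : ‖P‖ ^ 2 ≤ ‖A‖ ^ 2 + 2 * α k * (fstar - f (uu A)) := by
      nlinarith [hform, hbound, hα0 k, hαLd k, sq_nonneg ‖P - A‖]
    -- part (i) step
    have part1 : ∀ xs ∈ Xstar, ‖P - xs‖ ≤ ‖A - xs‖ := by
      intro xs hxs
      rw [hXstar] at hxs
      obtain ⟨hxsK, hdxs⟩ := hxs
      have hVIxs := hzP xs hxsK
      rw [hzPe, inner_add_left, real_inner_smul_left] at hVIxs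
      have e1 : ⟪A - P, xs - P⟫ = -⟪A - P, P - xs⟫ := by
        rw [show xs - P = -(P - xs) by abel, inner_neg_right]
      have e2 : ⟪sA, xs - P⟫ = -⟪sA, P - xs⟫ := by
        rw [show xs - P = -(P - xs) by abel, inner_neg_right]
      rw [e1, e2] at hVIxs
      -- hVIxs : -⟪A - P, P - xs⟫ + α k * -⟪sA, P - xs⟫ ≤ 0
      have hsplit : ⟪sA, P - xs⟫ = ⟪sA, P - A⟫ + ⟪sA, A - xs⟫ := by
        rw [← inner_add_right]
        congr 1
        abel
      have hg1 : ⟪sA, A - xs⟫ ≤ d A - fstar := by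
        have h := hgrad A xs
        rw [← hsA, hdxs] at h
        have hc : ⟪xs - A, sA⟫ = ⟪sA, xs - A⟫ := real_inner_comm _ _
        have e : ⟪sA, xs - A⟫ = -⟪sA, A - xs⟫ := by
          rw [show xs - A = -(A - xs) by abel, inner_neg_right]
        rw [hc, e] at h
        linarith
      have hg2 : ⟪sA, P - A⟫ ≤ d P - d A + Ld / 2 * ‖P - A‖ ^ 2 := by
        rw [hcomm] at hD
        linarith
      have hfP : d P ≤ fstar := hwd P hPK
      have hBB : ⟪sA, P - xs⟫ ≤ Ld / 2 * ‖P - A‖ ^ 2 := by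
        rw [hsplit]; linarith
      have hid : ‖A - xs‖ ^ 2 = ‖A - P‖ ^ 2 + 2 * ⟪A - P, P - xs⟫ + ‖P - xs‖ ^ 2 := by
        have := norm_add_sq_real (A - P) (P - xs)
        rw [show (A - P) + (P - xs) = A - xs by abel] at this
        exact this
      have hnr : ‖A - P‖ = ‖P - A‖ := norm_sub_rev _ _
      have h5 : α k * ⟪sA, P - xs⟫ ≤ α k * (Ld / 2 * ‖P - A‖ ^ 2) :=
        mul_le_mul_of_nonneg_left hBB (le_of_lt (hα0 k))
      have h6 : α k * (Ld / 2 * ‖P - A‖ ^ 2) ≤ ‖P - A‖ ^ 2 / 2 := by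
        nlinarith [sq_nonneg ‖P - A‖, hαLd k]
      rw [hnr] at hid
      have hsq : ‖P - xs‖ ^ 2 ≤ ‖A - xs‖ ^ 2 := by linarith
      nlinarith [norm_nonneg (P - xs), norm_nonneg (A - xs)]
    exact ⟨part1, part2, part3⟩
  refine ⟨?_, fun k => (key k).2.1, fun k => (key k).2.2⟩
  intro k xs hxs
  induction k with
  | zero => exact le_refl _
  | succ k ih => exact le_trans ((key k).1 xs hxs) ih
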